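/- Let κ > 0, u₀ > 0, a > 0, β > 0, and let u solve u''/(1-u'²)^{3/2} = κu on [0,a] with u(0) = u₀, u'(0) = 0, u'(a) = tanh β. Then u₀ < sinh β/(a·κ). -/

import Mathlib

/-- Upper bound on the lowest height: u₀ < sinh β / (aκ). -/
theorem stmt_16 (κ u₀ a β : ℝ) (hκ : 0 < κ) (hu₀ : 0 < u₀) (ha : 0 < a) (hβ : 0 < β)
    (u u' u'' : ℝ → ℝ)
    (hu : ∀ r ∈ Set.Icc (0:ℝ) a, HasDerivAt u (u' r) r)
    (hu' : ∀ r ∈ Set.Icc (0:ℝ) a, HasDerivAt u' (u'' r) r)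
    (hsp : ∀ r ∈ Set.Icc (0:ℝ) a, |u' r| < 1)
    (hode : ∀ r ∈ Set.Icc (0:ℝ) a,
      u'' r = κ * u r * Real.sqrt (1 - u' r ^ 2) ^ 3)
    (hu0 : u 0 = u₀) (hu'0 : u' 0 = 0) (hu'a : u' a = Real.tanh β) :
    u₀ < Real.sinh β / (a * κ) := by
  have h0a : (0:ℝ) ∈ Set.Icc (0:ℝ) a := ⟨le_refl 0, ha.le⟩
  have haa : a ∈ Set.Icc (0:ℝ) a := ⟨ha.le, le_refl a⟩
  have hP : ∀ r ∈ Set.Icc (0:ℝ) a, (0:ℝ) < 1 - u' r ^ 2 := by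
    intro r hr
    have h := hsp r hr
    have := abs_nonneg (u' r)
    nlinarith [sq_abs (u' r)]
  have hs : ∀ r ∈ Set.Icc (0:ℝ) a, (0:ℝ) < Real.sqrt (1 - u' r ^ 2) :=
    fun r hr => Real.sqrt_pos.2 (hP r hr)
  have hs2 : ∀ r ∈ Set.Icc (0:ℝ) a, Real.sqrt (1 - u' r ^ 2) ^ 2 = 1 - u' r ^ 2 :=
    fun r hr => Real.sq_sqrt (hP r hr).le
  -- derivative of inverse-sqrt factor
  have hinv : ∀ r ∈ Set.Icc (0:ℝ) a,
      HasDerivAt (fun x => (Real.sqrt (1 - u' x ^ 2))⁻¹)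
        (-(-(2 * u' r ^ 1 * u'' r) / (2 * Real.sqrt (1 - u' r ^ 2))) /
          Real.sqrt (1 - u' r ^ 2) ^ 2) r := by
    intro r hr
    have h1 : HasDerivAt (fun x => u' x ^ 2) (2 * u' r ^ 1 * u'' r) r := (hu' r hr).pow 2
    have h2 : HasDerivAt (fun x => 1 - u' x ^ 2) (-(2 * u' r ^ 1 * u'' r)) r := h1.const_sub 1
    have h3 := h2.sqrt (hP r hr).ne'
    exact h3.inv (hs r hr).ne'
  -- conserved quantity
  have hG : ∀ r ∈ Set.Icc (0:ℝ) a,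
      HasDerivAt (fun x => (Real.sqrt (1 - u' x ^ 2))⁻¹ - κ * u x ^ 2 / 2) 0 r := by
    intro r hr
    have h5 : HasDerivAt (fun x => κ * u x ^ 2 / 2) (κ * (2 * u r ^ 1 * u' r) / 2) r :=
      (((hu r hr).pow 2).const_mul κ).div_const 2
    have h6 := (hinv r hr).sub h5
    convert h6 using 1
    · rfl
    · rfl
    · rfl
    rw [hode r hr]
    have key := hs2 r hr
    have hne := (hs r hr).ne'
    field_simp
    nlinarith [key, hs r hr]
  have hGconst : ∀ r ∈ Set.Icc (0:ℝ) a,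
      (Real.sqrt (1 - u' r ^ 2))⁻¹ - κ * u r ^ 2 / 2
        = (Real.sqrt (1 - u' 0 ^ 2))⁻¹ - κ * u 0 ^ 2 / 2 := by
    intro r hr
    have hsub : Set.uIcc (0:ℝ) r ⊆ Set.Icc (0:ℝ) a := by
      rw [Set.uIcc_of_le hr.1]
      exact fun x hx => ⟨hx.1, hx.2.trans hr.2⟩
    have := intervalIntegral.integral_eq_sub_of_hasDerivAt
      (f := fun x => (Real.sqrt (1 - u' x ^ 2))⁻¹ - κ * u x ^ 2 / 2)
      (f' := fun _ => (0:ℝ)) (fun x hx => hG x (hsub hx)) intervalIntegrable_const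
    simp at this
    linarith [this]
  -- simplify the constant: at 0, u' 0 = 0, u 0 = u₀
  have hG0 : (Real.sqrt (1 - u' 0 ^ 2))⁻¹ - κ * u 0 ^ 2 / 2 = 1 - κ * u₀ ^ 2 / 2 := by
    rw [hu'0, hu0]; norm_num
  -- u r ^ 2 ≥ u₀ ^ 2 everywhere
  have hsq_ge : ∀ r ∈ Set.Icc (0:ℝ) a, u₀ ^ 2 ≤ u r ^ 2 := by
    intro r hr
    have h := hGconst r hr
    rw [hG0] at h
    have hle1 : Real.sqrt (1 - u' r ^ 2) ≤ 1 :=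
      Real.sqrt_le_one.2 (by nlinarith [sq_nonneg (u' r)])
    have h1 : (1:ℝ) ≤ (Real.sqrt (1 - u' r ^ 2))⁻¹ := (one_le_inv₀ (hs r hr)).2 hle1
    nlinarith
  -- continuity of u
  have hcont : ContinuousOn u (Set.Icc (0:ℝ) a) :=
    fun r hr => (hu r hr).continuousAt.continuousWithinAt
  -- u ≥ u₀ everywhere
  have hge : ∀ r ∈ Set.Icc (0:ℝ) a, u₀ ≤ u r := by
    intro r hr
    by_contra hlt
    push_neg at hlt
    have hneg : u r ≤ 0 := by nlinarith [hsq_ge r hr]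
    have hcont' : ContinuousOn u (Set.Icc (0:ℝ) r) :=
      hcont.mono (fun x hx => ⟨hx.1, hx.2.trans hr.2⟩)
    have hiv : (0:ℝ) ∈ Set.Icc (u r) (u 0) := by
      rw [hu0]; exact ⟨hneg, hu₀.le⟩
    obtain ⟨s, hsmem, hus⟩ := intermediate_value_Icc' hr.1 hcont' hiv
    have := hsq_ge s ⟨hsmem.1, hsmem.2.trans hr.2⟩
    rw [hus] at this
    nlinarith
  -- strict inequality at a
  have hta : 0 < Real.tanh β := by
    rw [Real.tanh_eq_sinh_div_cosh]
    exact div_pos (Real.sinh_pos_iff.2 hβ) (Real.cosh_pos β)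
  have hua : u₀ < u a := by
    have h := hGconst a haa
    rw [hG0] at h
    have hlt0 : 1 - u' a ^ 2 < 1 := by rw [hu'a]; nlinarith
    have hlt1 : Real.sqrt (1 - u' a ^ 2) < 1 :=
      (Real.sqrt_lt_sqrt (hP a haa).le hlt0).trans_le (by rw [Real.sqrt_one])
    have h1 : (1:ℝ) < (Real.sqrt (1 - u' a ^ 2))⁻¹ := (one_lt_inv₀ (hs a haa)).2 hlt1
    by_contra hle
    push_neg at hle
    have heq : u a = u₀ := le_antisymm hle (hge a haa)
    rw [heq] at h
    linarith
  -- FTC for g(r) = u'(r)/√(1-u'(r)²)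
  have hg : ∀ r ∈ Set.Icc (0:ℝ) a,
      HasDerivAt (fun x => u' x * (Real.sqrt (1 - u' x ^ 2))⁻¹) (κ * u r) r := by
    intro r hr
    have h6 := (hu' r hr).mul (hinv r hr)
    convert h6 using 1
    · rfl
    · rfl
    · rfl
    rw [hode r hr]
    have key := hs2 r hr
    have hne := (hs r hr).ne'
    field_simp
    linear_combination (-u r) * key
  have hcontκu : ContinuousOn (fun x => κ * u x) (Set.Icc (0:ℝ) a) :=
    continuousOn_const.mul hcont
  have hFTC : ∫ x in (0:ℝ)..a, κ * u x
      = u' a * (Real.sqrt (1 - u' a ^ 2))⁻¹ - u' 0 * (Real.sqrt (1 - u' 0 ^ 2))⁻¹ := by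
    apply intervalIntegral.integral_eq_sub_of_hasDerivAt
    · intro x hx
      rw [Set.uIcc_of_le ha.le] at hx
      exact hg x hx
    · exact (hcontκu.intervalIntegrable_of_Icc ha.le)
  have hga : u' a * (Real.sqrt (1 - u' a ^ 2))⁻¹ = Real.sinh β := by
    rw [hu'a]
    have hcosh : (0:ℝ) < Real.cosh β := Real.cosh_pos β
    have h1 : 1 - Real.tanh β ^ 2 = (Real.cosh β)⁻¹ ^ 2 := by
      rw [Real.tanh_eq_sinh_div_cosh]
      have := Real.cosh_sq β
      field_simp
      linarith
    rw [h1, Real.sqrt_sq (by positivity), inv_inv, Real.tanh_eq_sinh_div_cosh]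
    field_simp
  have hg0 : u' 0 * (Real.sqrt (1 - u' 0 ^ 2))⁻¹ = 0 := by rw [hu'0]; ring
  have hint : ∫ x in (0:ℝ)..a, κ * u x = Real.sinh β := by
    rw [hFTC, hga, hg0, sub_zero]
  -- strict integral comparison
  have hstrict : ∫ x in (0:ℝ)..a, κ * u₀ < ∫ x in (0:ℝ)..a, κ * u x := by
    apply intervalIntegral.integral_lt_integral_of_continuousOn_of_le_of_exists_lt ha
      continuousOn_const hcontκu
    · intro x hx
      exact mul_le_mul_of_nonneg_left (hge x ⟨hx.1.le, hx.2⟩) hκ.le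
    · exact ⟨a, haa, mul_lt_mul_of_pos_left hua hκ⟩
  have hconstint : ∫ x in (0:ℝ)..a, κ * u₀ = a * (κ * u₀) := by
    simp; ring
  rw [hconstint, hint] at hstrict
  rw [lt_div_iff₀ (by positivity)]
  nlinarith [hstrict]
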